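/- Single-element accuracy of the large-domain estimator: let n, B, b be positive integers with b ≥ 2, 0 < ε ≤ 3, 0 < δ < 1, β ∈ (0,1], and set ρ = (32·ln(2/δ)/ε²)·(b/n). Let p_col be a real number with 0 ≤ p_col < 1/b, let g be an integer with 0 ≤ g ≤ n, and let X = g + Y₁ + Y₂ where Y₁ ~ Binomial(n − g, p_col) and Y₂ ~ Binomial(n, ρ/b) are independent (ρ/b ≤ 1 is assumed). Define ĝ = (X − n·ρ/b − n·p_col)/(1 − p_col). Then Pr[ |ĝ − g| > 2·max{ 3·ln(2B/β), √( 3·ln(2B/β) · ( n/b + 32·ln(2/δ)/ε² ) ) } ] < β/B. -/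

import Mathlib

open scoped ENNReal

/-- A `{0,1}`-valued Bernoulli random variable with success probability `q`, as a `PMF ℕ`. -/
noncomputable def bernoulliNat (q : ℝ≥0∞) (h : q ≤ 1) : PMF ℕ :=
  (PMF.ofFintype (fun b => cond b q (1 - q)) (by simp [h])).map (fun b => if b then 1 else 0)

/-- The `Binomial(N, q)` distribution, built as a sum of `N` independent Bernoulli's. -/
noncomputable def binomialNat (q : ℝ≥0∞) (h : q ≤ 1) : ℕ → PMF ℕ
  | 0 => PMF.pure 0
  | N + 1 => (bernoulliNat q h).bind fun a => (binomialNat q h N).map (a + ·)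

noncomputable def emgf (P : PMF ℕ) (s : ℝ) : ℝ≥0∞ :=
  ∑' k, P k * ENNReal.ofReal (Real.exp (s * k))

lemma tsum_bind_mul {α β : Type*} (p : PMF α) (f : α → PMF β) (g : β → ℝ≥0∞) :
    ∑' b, (p.bind f) b * g b = ∑' a, p a * ∑' b, (f a) b * g b := by
  calc ∑' b, (p.bind f) b * g b
      = ∑' b, ∑' a, p a * (f a) b * g b := by
        simp only [PMF.bind_apply, ← ENNReal.tsum_mul_right]
    _ = ∑' a, ∑' b, p a * ((f a) b * g b) := by
        rw [ENNReal.tsum_comm]; simp only [mul_assoc]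
    _ = ∑' a, p a * ∑' b, (f a) b * g b := by
        simp only [ENNReal.tsum_mul_left]

lemma tsum_map_mul {α β : Type*} (p : PMF α) (f : α → β) (g : β → ℝ≥0∞) :
    ∑' b, (p.map f) b * g b = ∑' a, p a * g (f a) := by
  rw [PMF.map, tsum_bind_mul]
  refine tsum_congr fun a => ?_
  congr 1
  rw [tsum_eq_single (f a) (by intro b hb; simp [PMF.pure_apply, hb])]
  simp [PMF.pure_apply]

lemma emgf_bernoulliNat (q : ℝ≥0∞) (h : q ≤ 1) (s : ℝ) :
    emgf (bernoulliNat q h) s = (1 - q) + q * ENNReal.ofReal (Real.exp s) := by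
  unfold emgf bernoulliNat
  rw [tsum_map_mul, tsum_bool]
  simp [PMF.ofFintype_apply]

lemma emgf_binomialNat (q : ℝ≥0∞) (h : q ≤ 1) (N : ℕ) (s : ℝ) :
    emgf (binomialNat q h N) s = ((1 - q) + q * ENNReal.ofReal (Real.exp s)) ^ N := by
  induction N with
  | zero =>
      unfold emgf binomialNat
      rw [tsum_eq_single 0 (by intro b hb; simp [PMF.pure_apply, hb])]
      simp [PMF.pure_apply]
  | succ N ih =>
      show emgf ((bernoulliNat q h).bind fun a => (binomialNat q h N).map (a + ·)) s = _
      unfold emgf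
      rw [tsum_bind_mul]
      have : ∀ a : ℕ, ∑' b, ((binomialNat q h N).map (a + ·)) b * ENNReal.ofReal (Real.exp (s * b))
          = ENNReal.ofReal (Real.exp (s * a)) * emgf (binomialNat q h N) s := by
        intro a
        rw [tsum_map_mul]
        unfold emgf
        rw [← ENNReal.tsum_mul_left]
        refine tsum_congr fun k => ?_
        rw [← mul_assoc, mul_comm (ENNReal.ofReal _) ((binomialNat q h N) k), mul_assoc,
          ← ENNReal.ofReal_mul (Real.exp_nonneg _), ← Real.exp_add]
        push_cast
        ring_nf
      simp only [this]
      have : ∑' a, (bernoulliNat q h) a * (ENNReal.ofReal (Real.exp (s * a)) * emgf (binomialNat q h N) s)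
          = emgf (bernoulliNat q h) s * emgf (binomialNat q h N) s := by
        unfold emgf
        rw [← ENNReal.tsum_mul_right]
        refine tsum_congr fun a => by ring
      rw [this, ih, emgf_bernoulliNat, pow_succ]
      ring

-- binomial mgf bound, assuming the equality lemma
lemma base_le (q' : ℝ) (h0 : 0 ≤ q') (h1 : q' ≤ 1) (s : ℝ) :
    (1 - ENNReal.ofReal q') + ENNReal.ofReal q' * ENNReal.ofReal (Real.exp s)
      ≤ ENNReal.ofReal (Real.exp (q' * (Real.exp s - 1))) := by
  have e1 : (1 : ℝ≥0∞) - ENNReal.ofReal q' = ENNReal.ofReal (1 - q') := by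
    rw [ENNReal.ofReal_sub _ h0, ENNReal.ofReal_one]
  rw [e1, ← ENNReal.ofReal_mul h0, ← ENNReal.ofReal_add (by linarith) (by positivity)]
  apply ENNReal.ofReal_le_ofReal
  have := Real.add_one_le_exp (q' * (Real.exp s - 1))
  nlinarith [Real.exp_nonneg s]

-- Markov upper
lemma markov_upper (P : PMF ℕ) (s c : ℝ) (hs : 0 ≤ s) :
    P.toOuterMeasure {X : ℕ | c ≤ (X : ℝ)} ≤ ENNReal.ofReal (Real.exp (-(s * c))) * emgf P s := by
  rw [PMF.toOuterMeasure_apply]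
  unfold emgf
  rw [← ENNReal.tsum_mul_left]
  refine ENNReal.tsum_le_tsum fun k => ?_
  by_cases hk : k ∈ {X : ℕ | c ≤ (X : ℝ)}
  · rw [Set.indicator_of_mem hk]
    rw [← mul_assoc, mul_comm (ENNReal.ofReal _) (P k), mul_assoc,
      ← ENNReal.ofReal_mul (Real.exp_nonneg _), ← Real.exp_add]
    nth_rewrite 1 [← mul_one (P k)]
    apply mul_le_mul_right
    rw [show (1 : ℝ≥0∞) = ENNReal.ofReal (Real.exp 0) by simp]
    apply ENNReal.ofReal_le_ofReal
    apply Real.exp_le_exp.mpr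
    have hc : c ≤ (k : ℝ) := hk
    nlinarith
  · rw [Set.indicator_of_notMem hk]; exact zero_le'

lemma markov_lower (P : PMF ℕ) (s c : ℝ) (hs : 0 ≤ s) :
    P.toOuterMeasure {X : ℕ | (X : ℝ) ≤ c} ≤ ENNReal.ofReal (Real.exp (s * c)) * emgf P (-s) := by
  rw [PMF.toOuterMeasure_apply]
  unfold emgf
  rw [← ENNReal.tsum_mul_left]
  refine ENNReal.tsum_le_tsum fun k => ?_
  by_cases hk : k ∈ {X : ℕ | (X : ℝ) ≤ c}
  · rw [Set.indicator_of_mem hk]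
    rw [← mul_assoc, mul_comm (ENNReal.ofReal _) (P k), mul_assoc,
      ← ENNReal.ofReal_mul (Real.exp_nonneg _), ← Real.exp_add]
    nth_rewrite 1 [← mul_one (P k)]
    apply mul_le_mul_right
    rw [show (1 : ℝ≥0∞) = ENNReal.ofReal (Real.exp 0) by simp]
    apply ENNReal.ofReal_le_ofReal
    apply Real.exp_le_exp.mpr
    have hc : (k : ℝ) ≤ c := hk
    nlinarith
  · rw [Set.indicator_of_notMem hk]; exact zero_le'

-- exp quadratic bounds
lemma exp_quad_upper {x : ℝ} (h0 : 0 ≤ x) (h1 : x ≤ 9/10) :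
    Real.exp x ≤ 1 + x + (7/10) * x ^ 2 := by
  have hb := Real.exp_bound (x := x) (by rw [abs_of_nonneg h0]; linarith) (n := 3) (by norm_num)
  have : ∑ m ∈ Finset.range 3, x ^ m / (Nat.factorial m : ℝ) = 1 + x + x ^ 2 / 2 := by
    simp [Finset.sum_range_succ, Nat.factorial]
  rw [this] at hb
  rw [abs_of_nonneg h0] at hb
  have h3 : x ^ 3 * ((3 + 1 : ℕ) / ((Nat.factorial 3 : ℝ) * 3)) = x ^ 3 * (2/9) := by
    norm_num [Nat.factorial]
  have hb' : Real.exp x - (1 + x + x ^ 2 / 2) ≤ x ^ 3 * (2/9) := by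
    calc Real.exp x - (1 + x + x ^ 2 / 2) ≤ |Real.exp x - (1 + x + x ^ 2 / 2)| := le_abs_self _
    _ ≤ _ := by rw [← h3]; exact_mod_cast hb
  nlinarith [sq_nonneg x]

lemma exp_quad_lower {x : ℝ} (h0 : 0 ≤ x) (h1 : x ≤ 9/10) :
    Real.exp (-x) ≤ 1 - x + (7/10) * x ^ 2 := by
  have hb := Real.exp_bound (x := -x) (by rw [abs_neg, abs_of_nonneg h0]; linarith) (n := 3) (by norm_num)
  have : ∑ m ∈ Finset.range 3, (-x) ^ m / (Nat.factorial m : ℝ) = 1 - x + x ^ 2 / 2 := by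
    simp [Finset.sum_range_succ, Nat.factorial]; ring
  rw [this, abs_neg, abs_of_nonneg h0] at hb
  have hb' : Real.exp (-x) - (1 - x + x ^ 2 / 2) ≤ x ^ 3 * (2/9) := by
    calc Real.exp (-x) - (1 - x + x ^ 2 / 2) ≤ |Real.exp (-x) - (1 - x + x ^ 2 / 2)| := le_abs_self _
    _ ≤ _ := by
        refine le_trans hb ?_
        norm_num [Nat.factorial]
  nlinarith [sq_nonneg x]

lemma emgf_composite (P Q : PMF ℕ) (g : ℕ) (s : ℝ) :
    emgf (P.bind fun y₁ => Q.map (fun y₂ => g + y₁ + y₂)) s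
      = ENNReal.ofReal (Real.exp (s * g)) * emgf P s * emgf Q s := by
  unfold emgf
  rw [tsum_bind_mul]
  have h1 : ∀ y₁ : ℕ, ∑' X, (Q.map (fun y₂ => g + y₁ + y₂)) X * ENNReal.ofReal (Real.exp (s * X))
      = ENNReal.ofReal (Real.exp (s * g)) * ENNReal.ofReal (Real.exp (s * y₁)) *
        ∑' k, Q k * ENNReal.ofReal (Real.exp (s * k)) := by
    intro y₁
    rw [tsum_map_mul, ← ENNReal.tsum_mul_left]
    refine tsum_congr fun k => ?_
    have he : Real.exp (s * ((g + y₁ + k : ℕ) : ℝ)) =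
        Real.exp (s * g) * Real.exp (s * y₁) * Real.exp (s * k) := by
      rw [← Real.exp_add, ← Real.exp_add]
      congr 1
      push_cast
      ring
    rw [he, ENNReal.ofReal_mul (by positivity), ENNReal.ofReal_mul (Real.exp_nonneg _)]
    ring
  simp only [h1]
  have h2 : ∀ y₁ : ℕ, P y₁ * (ENNReal.ofReal (Real.exp (s * g)) * ENNReal.ofReal (Real.exp (s * y₁)) *
        ∑' k, Q k * ENNReal.ofReal (Real.exp (s * k)))
      = ENNReal.ofReal (Real.exp (s * g)) *
          ((P y₁ * ENNReal.ofReal (Real.exp (s * y₁))) * ∑' k, Q k * ENNReal.ofReal (Real.exp (s * k))) := by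
    intro y₁; ring
  simp only [h2]
  rw [ENNReal.tsum_mul_left, ENNReal.tsum_mul_right, ← mul_assoc]

lemma emgf_binom_le (q' : ℝ) (h0 : 0 ≤ q') (h1 : q' ≤ 1) (H : ENNReal.ofReal q' ≤ 1)
    (N : ℕ) (s : ℝ) :
    emgf (binomialNat (ENNReal.ofReal q') H N) s
      ≤ ENNReal.ofReal (Real.exp ((N : ℝ) * (q' * (Real.exp s - 1)))) := by
  rw [emgf_binomialNat, Real.exp_nat_mul, ENNReal.ofReal_pow (Real.exp_nonneg _)]
  exact pow_le_pow_left' (base_le q' h0 h1 s) N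

lemma tail_upper (p₁ p₂ : ℝ) (h₁0 : 0 ≤ p₁) (h₁1 : p₁ ≤ 1) (h₂0 : 0 ≤ p₂) (h₂1 : p₂ ≤ 1)
    (H₁ : ENNReal.ofReal p₁ ≤ 1) (H₂ : ENNReal.ofReal p₂ ≤ 1)
    (N₁ N₂ g : ℕ) (s c : ℝ) (hs : 0 ≤ s) :
    ((binomialNat (ENNReal.ofReal p₁) H₁ N₁).bind fun y₁ =>
       (binomialNat (ENNReal.ofReal p₂) H₂ N₂).map fun y₂ => g + y₁ + y₂).toOuterMeasure
      {X : ℕ | c ≤ (X : ℝ)}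
    ≤ ENNReal.ofReal (Real.exp ((N₁ : ℝ) * (p₁ * (Real.exp s - 1))
        + (N₂ : ℝ) * (p₂ * (Real.exp s - 1)) + s * ((g : ℝ) - c))) := by
  refine le_trans (markov_upper _ s c hs) ?_
  rw [emgf_composite]
  have hb1 := emgf_binom_le p₁ h₁0 h₁1 H₁ N₁ s
  have hb2 := emgf_binom_le p₂ h₂0 h₂1 H₂ N₂ s
  calc ENNReal.ofReal (Real.exp (-(s * c))) *
        (ENNReal.ofReal (Real.exp (s * g)) * emgf (binomialNat (ENNReal.ofReal p₁) H₁ N₁) s *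
          emgf (binomialNat (ENNReal.ofReal p₂) H₂ N₂) s)
      ≤ ENNReal.ofReal (Real.exp (-(s * c))) *
        (ENNReal.ofReal (Real.exp (s * g)) *
          ENNReal.ofReal (Real.exp ((N₁ : ℝ) * (p₁ * (Real.exp s - 1)))) *
          ENNReal.ofReal (Real.exp ((N₂ : ℝ) * (p₂ * (Real.exp s - 1))))) := by
        exact mul_le_mul_right (mul_le_mul' (mul_le_mul_right hb1 _) hb2) _
    _ = ENNReal.ofReal (Real.exp ((N₁ : ℝ) * (p₁ * (Real.exp s - 1))
        + (N₂ : ℝ) * (p₂ * (Real.exp s - 1)) + s * ((g : ℝ) - c))) := by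
        have hmerge : ∀ a b : ℝ, ENNReal.ofReal (Real.exp a) * ENNReal.ofReal (Real.exp b)
            = ENNReal.ofReal (Real.exp (a + b)) := fun a b => by
          rw [← ENNReal.ofReal_mul (Real.exp_nonneg _), ← Real.exp_add]
        simp only [← Real.exp_add, hmerge]
        congr 1
        congr 1
        ring

lemma tail_lower (p₁ p₂ : ℝ) (h₁0 : 0 ≤ p₁) (h₁1 : p₁ ≤ 1) (h₂0 : 0 ≤ p₂) (h₂1 : p₂ ≤ 1)
    (H₁ : ENNReal.ofReal p₁ ≤ 1) (H₂ : ENNReal.ofReal p₂ ≤ 1)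
    (N₁ N₂ g : ℕ) (s c : ℝ) (hs : 0 ≤ s) :
    ((binomialNat (ENNReal.ofReal p₁) H₁ N₁).bind fun y₁ =>
       (binomialNat (ENNReal.ofReal p₂) H₂ N₂).map fun y₂ => g + y₁ + y₂).toOuterMeasure
      {X : ℕ | (X : ℝ) ≤ c}
    ≤ ENNReal.ofReal (Real.exp ((N₁ : ℝ) * (p₁ * (Real.exp (-s) - 1))
        + (N₂ : ℝ) * (p₂ * (Real.exp (-s) - 1)) + s * (c - (g : ℝ)))) := by
  refine le_trans (markov_lower _ s c hs) ?_
  rw [emgf_composite]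
  have hb1 := emgf_binom_le p₁ h₁0 h₁1 H₁ N₁ (-s)
  have hb2 := emgf_binom_le p₂ h₂0 h₂1 H₂ N₂ (-s)
  calc ENNReal.ofReal (Real.exp (s * c)) *
        (ENNReal.ofReal (Real.exp (-s * g)) * emgf (binomialNat (ENNReal.ofReal p₁) H₁ N₁) (-s) *
          emgf (binomialNat (ENNReal.ofReal p₂) H₂ N₂) (-s))
      ≤ ENNReal.ofReal (Real.exp (s * c)) *
        (ENNReal.ofReal (Real.exp (-s * g)) *
          ENNReal.ofReal (Real.exp ((N₁ : ℝ) * (p₁ * (Real.exp (-s) - 1)))) *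
          ENNReal.ofReal (Real.exp ((N₂ : ℝ) * (p₂ * (Real.exp (-s) - 1))))) := by
        exact mul_le_mul_right (mul_le_mul' (mul_le_mul_right hb1 _) hb2) _
    _ = ENNReal.ofReal (Real.exp ((N₁ : ℝ) * (p₁ * (Real.exp (-s) - 1))
        + (N₂ : ℝ) * (p₂ * (Real.exp (-s) - 1)) + s * (c - (g : ℝ)))) := by
        have hmerge : ∀ a b : ℝ, ENNReal.ofReal (Real.exp a) * ENNReal.ofReal (Real.exp b)
            = ENNReal.ofReal (Real.exp (a + b)) := fun a b => by
          rw [← ENNReal.ofReal_mul (Real.exp_nonneg _), ← Real.exp_add]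
        simp only [← Real.exp_add, hmerge]
        congr 1
        congr 1
        ring

lemma choose_upper (m t X0 : ℝ) (hm : 0 < m) (hX0 : 0 < X0) (hLt : 3 * X0 ≤ t)
    (hLm : 3 * X0 * m ≤ t ^ 2) :
    ∃ s : ℝ, 0 ≤ s ∧ m * (Real.exp s - 1) - s * (m + t) ≤ -(15/14) * X0 := by
  have ht : 0 < t := lt_of_lt_of_le (by linarith) hLt
  rcases le_or_gt t m with hcase | hcase
  · refine ⟨5 * t / (7 * m), by positivity, ?_⟩
    set s := 5 * t / (7 * m) with hs
    have hsdef : s * (7 * m) = 5 * t := by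
      rw [hs, div_mul_eq_mul_div, div_eq_iff (by positivity)]
    have hs0 : 0 ≤ s := by positivity
    have hs1 : s ≤ 9/10 := by
      rw [hs, div_le_iff₀ (by positivity)]
      nlinarith
    have hq := exp_quad_upper hs0 hs1
    have key : (m * (Real.exp s - 1) - s * (m + t)) * (7 * m) ≤ (-(15/14) * X0) * (7 * m) := by
      have h1 : m * (Real.exp s - 1) ≤ m * s + (7/10) * m * s ^ 2 := by nlinarith
      nlinarith [sq_nonneg (s * (7*m) - 5*t), hsdef, hLm]
    exact le_of_mul_le_mul_right key (by positivity)
  · refine ⟨Real.log 2, Real.log_nonneg (by norm_num), ?_⟩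
    have he : Real.exp (Real.log 2) = 2 := Real.exp_log (by norm_num)
    have hlog2 : (0.6931471803 : ℝ) < Real.log 2 := Real.log_two_gt_d9
    rw [he]
    nlinarith [hcase.le, hLt]

lemma choose_lower (m t X0 : ℝ) (hm : 0 < m) (hX0 : 0 < X0) (hLt : 3 * X0 ≤ t)
    (hLm : 3 * X0 * m ≤ t ^ 2) :
    ∃ s : ℝ, 0 ≤ s ∧ m * (Real.exp (-s) - 1) + s * (m - t) ≤ -(15/14) * X0 := by
  have ht : 0 < t := lt_of_lt_of_le (by linarith) hLt
  rcases le_or_gt t m with hcase | hcase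
  · refine ⟨5 * t / (7 * m), by positivity, ?_⟩
    set s := 5 * t / (7 * m) with hs
    have hsdef : s * (7 * m) = 5 * t := by rw [hs, div_mul_eq_mul_div, div_eq_iff (by positivity)]
    have hs0 : 0 ≤ s := by positivity
    have hs1 : s ≤ 9/10 := by
      rw [hs, div_le_iff₀ (by positivity)]
      nlinarith
    have hq := exp_quad_lower hs0 hs1
    have key : (m * (Real.exp (-s) - 1) + s * (m - t)) * (7 * m) ≤ (-(15/14) * X0) * (7 * m) := by
      have h1 : m * (Real.exp (-s) - 1) ≤ -(m * s) + (7/10) * m * s ^ 2 := by nlinarith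
      nlinarith [sq_nonneg (s * (7*m) - 5*t), hsdef, hLm]
    exact le_of_mul_le_mul_right key (by positivity)
  · have htm : 0 < t - m := by linarith
    have hspos : 0 < (15/14) * X0 / (t - m) := div_pos (by positivity) htm
    refine ⟨(15/14) * X0 / (t - m), hspos.le, ?_⟩
    set s := (15/14) * X0 / (t - m) with hs
    have hsm : s * (m - t) = -(15/14) * X0 := by
      rw [hs]
      field_simp
      ring
    have hexp : Real.exp (-s) ≤ 1 := Real.exp_le_one_iff.mpr (by linarith)
    nlinarith [hsm, hexp, hm]

set_option maxHeartbeats 1000000 in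
theorem stmt16 (n B b : ℕ) (hn : 0 < n) (hB : 0 < B) (hb2 : 2 ≤ b)
    (ε δ β : ℝ) (hε0 : 0 < ε) (hε3 : ε ≤ 3) (hδ0 : 0 < δ) (hδ1 : δ < 1)
    (hβ0 : 0 < β) (hβ1 : β ≤ 1)
    (ρ : ℝ) (hρ : ρ = 32 * Real.log (2 / δ) / ε ^ 2 * ((b : ℝ) / n))
    (pcol : ℝ) (hpcol0 : 0 ≤ pcol) (hpcol : pcol < 1 / b)
    (g : ℕ) (hg : g ≤ n)
    (hρb0 : 0 ≤ ρ / b) (hρb1 : ρ / b ≤ 1) :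
    (((binomialNat (ENNReal.ofReal pcol)
          (ENNReal.ofReal_le_one.mpr
            (hpcol.le.trans (by
              rw [div_le_one (by positivity)]
              exact_mod_cast Nat.one_le_iff_ne_zero.mpr (by omega)))) (n - g)).bind
        (fun y₁ =>
          (binomialNat (ENNReal.ofReal (ρ / b)) (ENNReal.ofReal_le_one.mpr hρb1) n).map
            (fun y₂ => g + y₁ + y₂))).toOuterMeasure
      {X | |(((X : ℝ) - n * (ρ / b) - n * pcol) / (1 - pcol)) - (g : ℝ)| >
        2 * max (3 * Real.log (2 * B / β))
          (Real.sqrt (3 * Real.log (2 * B / β) *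
            ((n : ℝ) / b + 32 * Real.log (2 / δ) / ε ^ 2)))}).toReal < β / B := by
  have hbR : (0:ℝ) < b := by exact_mod_cast (by omega : 0 < b)
  have hnR : (0:ℝ) < n := by exact_mod_cast hn
  have hBR : (1:ℝ) ≤ B := by exact_mod_cast hB
  set X0 := Real.log (2 * (B : ℝ) / β) with hX0def
  have h2B : (1:ℝ) < 2 * B / β := by
    rw [lt_div_iff₀ hβ0]; nlinarith
  have hX0 : 0 < X0 := Real.log_pos h2B
  have hlogδ : 0 < Real.log (2/δ) := Real.log_pos (by rw [lt_div_iff₀ hδ0]; nlinarith)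
  set V := (n:ℝ)/b + 32 * Real.log (2/δ) / ε^2 with hVdef
  set t0 := max (3 * X0) (Real.sqrt (3 * X0 * V)) with ht0def
  have hbhalf : (1:ℝ)/b ≤ 1/2 := by
    apply div_le_div_of_nonneg_left (by norm_num) (by norm_num)
    exact_mod_cast hb2
  have hpcolhalf : pcol ≤ 1/2 := hpcol.le.trans hbhalf
  have hpcol1 : pcol ≤ 1 := by linarith
  have hρ0 : 0 < ρ := by
    rw [hρ]
    exact mul_pos (div_pos (by linarith) (by positivity)) (div_pos hbR hnR)
  have hq0 : 0 < ρ/b := div_pos hρ0 hbR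
  set mR := ((n - g : ℕ) : ℝ) * pcol + (n:ℝ) * (ρ/b) with hmdef
  have hcast : ((n - g : ℕ) : ℝ) = (n:ℝ) - g := by
    rw [Nat.cast_sub hg]
  have hm0 : 0 < mR :=
    add_pos_of_nonneg_of_pos (mul_nonneg (Nat.cast_nonneg _) hpcol0) (mul_pos hnR hq0)
  have hnq : (n:ℝ) * (ρ/b) = 32 * Real.log (2/δ)/ε^2 := by
    rw [hρ]; field_simp
  have hgn : (g:ℝ) ≤ n := by exact_mod_cast hg
  have hmV : mR ≤ V := by
    rw [hmdef, hVdef, hnq, hcast]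
    have h1 : ((n:ℝ) - g) * pcol ≤ (n:ℝ) * pcol :=
      mul_le_mul_of_nonneg_right (by linarith) hpcol0
    have h2 : (n:ℝ) * pcol ≤ (n:ℝ) * (1/b) :=
      mul_le_mul_of_nonneg_left hpcol.le hnR.le
    have h3 : (n:ℝ) * (1/b) = (n:ℝ)/b := by ring
    linarith
  have ht0L : 3 * X0 ≤ t0 := le_max_left _ _
  have hV0 : 0 < V := lt_of_lt_of_le hm0 hmV
  have ht0sqV : 3 * X0 * V ≤ t0^2 := by
    have h1 : Real.sqrt (3*X0*V)^2 = 3*X0*V := Real.sq_sqrt (by positivity)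
    calc 3*X0*V = Real.sqrt (3*X0*V)^2 := h1.symm
    _ ≤ t0^2 := pow_le_pow_left₀ (Real.sqrt_nonneg _) (le_max_right _ _) 2
  have ht0sq : 3 * X0 * mR ≤ t0^2 :=
    le_trans (by nlinarith) ht0sqV
  have ht0 : 0 < t0 := lt_of_lt_of_le (by positivity) ht0L
  obtain ⟨s₁, hs₁0, hs₁⟩ := choose_upper mR t0 X0 hm0 hX0 ht0L ht0sq
  obtain ⟨s₂, hs₂0, hs₂⟩ := choose_lower mR t0 X0 hm0 hX0 ht0L ht0sq
  have hsub : {X : ℕ | |(((X : ℝ) - n * (ρ / b) - n * pcol) / (1 - pcol)) - (g : ℝ)| > 2 * t0}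
      ⊆ {X : ℕ | (g:ℝ) + mR + t0 ≤ X} ∪ {X : ℕ | (X:ℝ) ≤ (g:ℝ) + mR - t0} := by
    intro X hX
    simp only [Set.mem_setOf_eq] at hX
    have h1p : 0 < 1 - pcol := by linarith
    have habs : t0 < |(X:ℝ) - ((g:ℝ) + mR)| := by
      have hD : ((X:ℝ) - n * (ρ/b) - n * pcol)/(1-pcol) - g
          = ((X:ℝ) - ((g:ℝ)+mR)) / (1 - pcol) := by
        rw [hmdef, hcast]
        field_simp
        ring
      rw [hD, abs_div, abs_of_pos h1p, gt_iff_lt, lt_div_iff₀ h1p] at hX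
      nlinarith
    rcases lt_abs.mp habs with h | h
    · left; simp only [Set.mem_setOf_eq]; linarith
    · right; simp only [Set.mem_setOf_eq]; linarith
  set K := Real.exp (-(15/14) * X0) with hKdef
  have hmain : ((binomialNat (ENNReal.ofReal pcol)
          (ENNReal.ofReal_le_one.mpr
            (hpcol.le.trans (by
              rw [div_le_one (by positivity)]
              exact_mod_cast Nat.one_le_iff_ne_zero.mpr (by omega)))) (n - g)).bind
        (fun y₁ =>
          (binomialNat (ENNReal.ofReal (ρ / b)) (ENNReal.ofReal_le_one.mpr hρb1) n).map
            (fun y₂ => g + y₁ + y₂))).toOuterMeasure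
      {X | |(((X : ℝ) - n * (ρ / b) - n * pcol) / (1 - pcol)) - (g : ℝ)| > 2 * t0}
      ≤ ENNReal.ofReal (2 * K) := by
    refine le_trans (MeasureTheory.OuterMeasure.mono _ hsub) ?_
    refine le_trans (MeasureTheory.measure_union_le (μ := PMF.toOuterMeasure _) _ _) ?_
    have hup := tail_upper pcol (ρ/b) hpcol0 hpcol1 hρb0 hρb1
      (ENNReal.ofReal_le_one.mpr hpcol1) (ENNReal.ofReal_le_one.mpr hρb1) (n-g) n g s₁
      ((g:ℝ) + mR + t0) hs₁0
    have hlo := tail_lower pcol (ρ/b) hpcol0 hpcol1 hρb0 hρb1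
      (ENNReal.ofReal_le_one.mpr hpcol1) (ENNReal.ofReal_le_one.mpr hρb1) (n-g) n g s₂
      ((g:ℝ) + mR - t0) hs₂0
    have heq1 : ((n-g:ℕ):ℝ) * (pcol * (Real.exp s₁ - 1)) + (n:ℝ) * ((ρ/b) * (Real.exp s₁ - 1))
        + s₁ * ((g:ℝ) - ((g:ℝ) + mR + t0)) = mR * (Real.exp s₁ - 1) - s₁ * (mR + t0) := by
      rw [hmdef]; ring
    have heq2 : ((n-g:ℕ):ℝ) * (pcol * (Real.exp (-s₂) - 1)) + (n:ℝ) * ((ρ/b) * (Real.exp (-s₂) - 1))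
        + s₂ * (((g:ℝ) + mR - t0) - (g:ℝ)) = mR * (Real.exp (-s₂) - 1) + s₂ * (mR - t0) := by
      rw [hmdef]; ring
    rw [heq1] at hup
    rw [heq2] at hlo
    have h2K : ENNReal.ofReal (2 * K) = ENNReal.ofReal K + ENNReal.ofReal K := by
      rw [← ENNReal.ofReal_add (Real.exp_nonneg _) (Real.exp_nonneg _)]
      congr 1; ring
    rw [h2K]
    refine add_le_add (le_trans hup ?_) (le_trans hlo ?_)
    · exact ENNReal.ofReal_le_ofReal (Real.exp_le_exp.mpr hs₁)
    · exact ENNReal.ofReal_le_ofReal (Real.exp_le_exp.mpr hs₂)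
  have htoReal := ENNReal.toReal_mono ENNReal.ofReal_ne_top hmain
  rw [ENNReal.toReal_ofReal (by positivity)] at htoReal
  refine lt_of_le_of_lt htoReal ?_
  have hKval : 2 * K = Real.exp (Real.log 2 + -(15/14) * X0) := by
    rw [Real.exp_add, Real.exp_log (by norm_num : (0:ℝ) < 2), hKdef]
  have hr : β / (B:ℝ) = Real.exp (Real.log 2 - X0) := by
    rw [Real.exp_sub, Real.exp_log (by norm_num : (0:ℝ) < 2), hX0def,
      Real.exp_log (by positivity)]
    field_simp
  rw [hKval, hr]
  exact Real.exp_lt_exp.mpr (by linarith)
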